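/- In the Van Genuchten–Mualem model, with parameters K_S, α > 0, n > 1, m := 1 − 1/n, the hydraulic conductivity k(ψ) = K_S φ(ψ)^{m/2}[1 − (1 − φ(ψ))^m]², where φ(ψ) := 1/(1 + |αψ|^n), satisfies 0 < k(ψ) ≤ K_S for every ψ ≤ 0, and k is monotonically increasing on (−∞, 0). -/
import Mathlib


open Set

lemma vg_phi_mem (α n : ℝ) (hn : 1 < n) (ψ : ℝ) :
    0 < 1 / (1 + |α * ψ| ^ n) ∧ 1 / (1 + |α * ψ| ^ n) ≤ 1 := by
  have hx : (0:ℝ) ≤ |α * ψ| ^ n := Real.rpow_nonneg (abs_nonneg _) n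
  have h1 : (0:ℝ) < 1 + |α * ψ| ^ n := by linarith
  constructor
  · positivity
  · rw [div_le_one h1]; linarith

lemma vg_g_mono (KS m : ℝ) (hKS : 0 < KS) (hm0 : 0 < m) {a b : ℝ}
    (ha : 0 < a) (hab : a ≤ b) (hb1 : b ≤ 1) :
    KS * a ^ (m / 2) * (1 - (1 - a) ^ m) ^ 2 ≤ KS * b ^ (m / 2) * (1 - (1 - b) ^ m) ^ 2 := by
  have hm2 : (0:ℝ) ≤ m / 2 := by linarith
  have h1 : a ^ (m / 2) ≤ b ^ (m / 2) := Real.rpow_le_rpow ha.le hab hm2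
  have hbn : (0:ℝ) ≤ 1 - b := by linarith
  have h2 : (1 - b) ^ m ≤ (1 - a) ^ m :=
    Real.rpow_le_rpow hbn (by linarith) hm0.le
  have h3 : (1 - a) ^ m < 1 := Real.rpow_lt_one (by linarith) (by linarith) hm0
  have h4 : (0:ℝ) ≤ 1 - (1 - a) ^ m := by linarith
  have h5 : (1 - (1 - a) ^ m) ^ 2 ≤ (1 - (1 - b) ^ m) ^ 2 :=
    pow_le_pow_left₀ h4 (by linarith) 2
  have hKa : 0 ≤ KS * a ^ (m / 2) := by positivity
  have hKab : KS * a ^ (m / 2) ≤ KS * b ^ (m / 2) :=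
    mul_le_mul_of_nonneg_left h1 hKS.le
  exact mul_le_mul hKab h5 (sq_nonneg _) (by have hb := ha.trans_le hab; positivity)

/-- In the Van Genuchten–Mualem model, the hydraulic conductivity
`k(ψ) = K_S φ(ψ)^{m/2}[1 − (1 − φ(ψ))^m]²`, `φ(ψ) = 1/(1 + |αψ|^n)`,
`m = 1 − 1/n`, satisfies `0 < k(ψ) ≤ K_S` for every `ψ ≤ 0`, and `k` is
monotonically increasing on `(−∞, 0)`. -/
theorem vanGenuchten_conductivity_bounds_and_monotone
    (KS α n m : ℝ) (hKS : 0 < KS) (hα : 0 < α) (hn : 1 < n) (hm : m = 1 - 1 / n)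
    (φ k : ℝ → ℝ)
    (hφdef : ∀ ψ : ℝ, φ ψ = 1 / (1 + |α * ψ| ^ n))
    (hkdef : ∀ ψ : ℝ, k ψ = KS * (φ ψ) ^ (m / 2) * (1 - (1 - φ ψ) ^ m) ^ 2) :
    (∀ ψ ≤ (0:ℝ), 0 < k ψ ∧ k ψ ≤ KS) ∧ MonotoneOn k (Set.Iio (0:ℝ)) := by
  have hm0 : 0 < m := by
    rw [hm]
    have : 1 / n < 1 := by
      rw [div_lt_one (by linarith)]; linarith
    linarith
  have hφmem : ∀ ψ : ℝ, 0 < φ ψ ∧ φ ψ ≤ 1 := by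
    intro ψ; rw [hφdef]; exact vg_phi_mem α n hn ψ
  constructor
  · intro ψ _
    obtain ⟨h0, h1⟩ := hφmem ψ
    constructor
    · rw [hkdef]
      have h3 : (1 - φ ψ) ^ m < 1 := Real.rpow_lt_one (by linarith) (by linarith) hm0
      have h4 : (0:ℝ) < 1 - (1 - φ ψ) ^ m := by linarith
      positivity
    · calc k ψ ≤ KS * (1:ℝ) ^ (m / 2) * (1 - (1 - (1:ℝ)) ^ m) ^ 2 := by
            rw [hkdef]; exact vg_g_mono KS m hKS hm0 h0 h1 le_rfl
        _ = KS := by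
            norm_num [Real.zero_rpow hm0.ne']
  · intro ψ₁ h₁ ψ₂ h₂ h12
    simp only [mem_Iio] at h₁ h₂
    have habs : |α * ψ₂| ≤ |α * ψ₁| := by
      rw [abs_of_nonpos (by nlinarith), abs_of_nonpos (by nlinarith)]
      nlinarith
    have hφle : φ ψ₁ ≤ φ ψ₂ := by
      rw [hφdef, hφdef]
      have hr : |α * ψ₂| ^ n ≤ |α * ψ₁| ^ n :=
        Real.rpow_le_rpow (abs_nonneg _) habs (by linarith)
      have h2pos : (0:ℝ) < 1 + |α * ψ₂| ^ n := by
        have := Real.rpow_nonneg (abs_nonneg (α * ψ₂)) n; linarith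
      exact one_div_le_one_div_of_le h2pos (by linarith)
    rw [hkdef, hkdef]
    exact vg_g_mono KS m hKS hm0 (hφmem ψ₁).1 hφle (hφmem ψ₂).2
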